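/- Let Φ₁, Φ₂ be continuously differentiable real-valued functions and v, J, J̃ continuously differentiable vector fields of space (in ℝ³) and time on an open set, and let ρ₁, ρ₂ be nonzero constants. Suppose ∂Φ₁/∂t + ∇·(Φ₁ v) = −(1/ρ₁)∇·J, ∂Φ₂/∂t + ∇·(Φ₂ v) = −(1/ρ₂)∇·J̃, Φ₁ + Φ₂ = 1, and the mixture density ρ = ρ₁Φ₁ + ρ₂Φ₂ satisfies ∂ρ/∂t + ∇·(ρ v) = 0 pointwise. Then ∇·(J + J̃) = 0 and ∇·v = ((ρ₁ − ρ₂)/(ρ₁ρ₂)) ∇·J pointwise. -/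

import Mathlib

noncomputable section
open scoped BigOperators

/-- `i`-th spatial partial derivative of a scalar field on `ℝ³`. -/
def pd3 (i : Fin 3) (f : (Fin 3 → ℝ) → ℝ) (x : Fin 3 → ℝ) : ℝ :=
  fderiv ℝ f x (Pi.single i 1)

/-- Divergence of a vector field on `ℝ³`. -/
def div3 (u : (Fin 3 → ℝ) → Fin 3 → ℝ) (x : Fin 3 → ℝ) : ℝ :=
  ∑ i, pd3 i (fun y => u y i) x

lemma pd3_add {f g : (Fin 3 → ℝ) → ℝ} {x : Fin 3 → ℝ} (i : Fin 3)
    (hf : DifferentiableAt ℝ f x) (hg : DifferentiableAt ℝ g x) :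
    pd3 i (fun y => f y + g y) x = pd3 i f x + pd3 i g x := by
  simp [pd3, fderiv_fun_add hf hg]

lemma pd3_const_mul {f : (Fin 3 → ℝ) → ℝ} {x : Fin 3 → ℝ} (i : Fin 3) (c : ℝ)
    (hf : DifferentiableAt ℝ f x) :
    pd3 i (fun y => c * f y) x = c * pd3 i f x := by
  simp [pd3, fderiv_const_mul hf c]

lemma pd3_congr {f g : (Fin 3 → ℝ) → ℝ} {x : Fin 3 → ℝ} (i : Fin 3)
    (h : f =ᶠ[nhds x] g) : pd3 i f x = pd3 i g x := by
  simp [pd3, h.fderiv_eq]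


/-- **Quasi-incompressibility from the component volume balances.**
If `∂Φ₁/∂t + ∇·(Φ₁ v) = −(1/ρ₁)∇·J`, `∂Φ₂/∂t + ∇·(Φ₂ v) = −(1/ρ₂)∇·J̃`,
`Φ₁ + Φ₂ = 1` and `ρ = ρ₁Φ₁ + ρ₂Φ₂` satisfies `∂ρ/∂t + ∇·(ρ v) = 0`, then
`∇·(J + J̃) = 0` and `∇·v = ((ρ₁ − ρ₂)/(ρ₁ρ₂)) ∇·J` pointwise. -/
theorem quasi_incompressibility
    (ρ₁ ρ₂ : ℝ) (hρ₁ : ρ₁ ≠ 0) (hρ₂ : ρ₂ ≠ 0)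
    (U : Set (ℝ × (Fin 3 → ℝ))) (hU : IsOpen U)
    (Φ₁ Φ₂ : ℝ → (Fin 3 → ℝ) → ℝ)
    (v J Jt : ℝ → (Fin 3 → ℝ) → Fin 3 → ℝ)
    (hΦ₁ : ContDiffOn ℝ 1 (Function.uncurry Φ₁) U)
    (hΦ₂ : ContDiffOn ℝ 1 (Function.uncurry Φ₂) U)
    (hv : ∀ j, ContDiffOn ℝ 1 (fun q : ℝ × (Fin 3 → ℝ) => v q.1 q.2 j) U)
    (hJ : ∀ j, ContDiffOn ℝ 1 (fun q : ℝ × (Fin 3 → ℝ) => J q.1 q.2 j) U)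
    (hJt : ∀ j, ContDiffOn ℝ 1 (fun q : ℝ × (Fin 3 → ℝ) => Jt q.1 q.2 j) U)
    (hvol₁ : ∀ q ∈ U,
      deriv (fun s => Φ₁ s q.2) q.1 + div3 (fun y => Φ₁ q.1 y • v q.1 y) q.2
        = -(1 / ρ₁) * div3 (J q.1) q.2)
    (hvol₂ : ∀ q ∈ U,
      deriv (fun s => Φ₂ s q.2) q.1 + div3 (fun y => Φ₂ q.1 y • v q.1 y) q.2
        = -(1 / ρ₂) * div3 (Jt q.1) q.2)
    (hnovoid : ∀ q ∈ U, Φ₁ q.1 q.2 + Φ₂ q.1 q.2 = 1)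
    (hmass : ∀ q ∈ U,
      deriv (fun s => ρ₁ * Φ₁ s q.2 + ρ₂ * Φ₂ s q.2) q.1
        + div3 (fun y => (ρ₁ * Φ₁ q.1 y + ρ₂ * Φ₂ q.1 y) • v q.1 y) q.2 = 0) :
    ∀ q ∈ U,
      div3 (fun y => J q.1 y + Jt q.1 y) q.2 = 0 ∧
      div3 (v q.1) q.2 = ((ρ₁ - ρ₂) / (ρ₁ * ρ₂)) * div3 (J q.1) q.2 := by
  intro q hq
  have hmem : U ∈ nhds q := hU.mem_nhds hq
  -- differentiability of the uncurried fields at q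
  have dΦ₁ : DifferentiableAt ℝ (Function.uncurry Φ₁) q :=
    (hΦ₁.contDiffAt hmem).differentiableAt one_ne_zero
  have dΦ₂ : DifferentiableAt ℝ (Function.uncurry Φ₂) q :=
    (hΦ₂.contDiffAt hmem).differentiableAt one_ne_zero
  have dv : ∀ j, DifferentiableAt ℝ (fun p : ℝ × (Fin 3 → ℝ) => v p.1 p.2 j) q :=
    fun j => ((hv j).contDiffAt hmem).differentiableAt one_ne_zero
  have dJ : ∀ j, DifferentiableAt ℝ (fun p : ℝ × (Fin 3 → ℝ) => J p.1 p.2 j) q :=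
    fun j => ((hJ j).contDiffAt hmem).differentiableAt one_ne_zero
  have dJt : ∀ j, DifferentiableAt ℝ (fun p : ℝ × (Fin 3 → ℝ) => Jt p.1 p.2 j) q :=
    fun j => ((hJt j).contDiffAt hmem).differentiableAt one_ne_zero
  -- slices
  have slx : DifferentiableAt ℝ (fun y : Fin 3 → ℝ => (q.1, y)) q.2 :=
    (differentiableAt_const _).prodMk differentiableAt_id
  have slt : DifferentiableAt ℝ (fun s : ℝ => (s, q.2)) q.1 :=
    differentiableAt_id.prodMk (differentiableAt_const _)
  have dΦ₁x : DifferentiableAt ℝ (fun y => Φ₁ q.1 y) q.2 := dΦ₁.comp (g := Function.uncurry Φ₁) q.2 slx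
  have dΦ₂x : DifferentiableAt ℝ (fun y => Φ₂ q.1 y) q.2 := dΦ₂.comp (g := Function.uncurry Φ₂) q.2 slx
  have dΦ₁t : DifferentiableAt ℝ (fun s => Φ₁ s q.2) q.1 := dΦ₁.comp (g := Function.uncurry Φ₁) q.1 slt
  have dΦ₂t : DifferentiableAt ℝ (fun s => Φ₂ s q.2) q.1 := dΦ₂.comp (g := Function.uncurry Φ₂) q.1 slt
  have dvx : ∀ j, DifferentiableAt ℝ (fun y => v q.1 y j) q.2 :=
    fun j => (dv j).comp (g := fun p : ℝ × (Fin 3 → ℝ) => v p.1 p.2 j) q.2 slx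
  have dJx : ∀ j, DifferentiableAt ℝ (fun y => J q.1 y j) q.2 :=
    fun j => (dJ j).comp (g := fun p : ℝ × (Fin 3 → ℝ) => J p.1 p.2 j) q.2 slx
  have dJtx : ∀ j, DifferentiableAt ℝ (fun y => Jt q.1 y j) q.2 :=
    fun j => (dJt j).comp (g := fun p : ℝ × (Fin 3 → ℝ) => Jt p.1 p.2 j) q.2 slx
  -- neighbourhoods inside U
  have hx : {y : Fin 3 → ℝ | (q.1, y) ∈ U} ∈ nhds q.2 :=
    (hU.preimage (Continuous.prodMk_right q.1)).mem_nhds hq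
  have ht : {s : ℝ | (s, q.2) ∈ U} ∈ nhds q.1 :=
    (hU.preimage (continuous_id.prodMk continuous_const)).mem_nhds hq
  -- (3): time derivatives sum to zero
  have e3 : deriv (fun s => Φ₁ s q.2) q.1 + deriv (fun s => Φ₂ s q.2) q.1 = 0 := by
    have h1 : (fun s => Φ₁ s q.2 + Φ₂ s q.2) =ᶠ[nhds q.1] fun _ => (1 : ℝ) := by
      filter_upwards [ht] with s hs
      exact hnovoid (s, q.2) hs
    have h2 := h1.deriv_eq
    rw [deriv_const] at h2
    rw [← deriv_fun_add dΦ₁t dΦ₂t, h2]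
  -- (4): div of Φ₁ v plus div of Φ₂ v is div v
  have e4 : div3 (fun y => Φ₁ q.1 y • v q.1 y) q.2
      + div3 (fun y => Φ₂ q.1 y • v q.1 y) q.2 = div3 (v q.1) q.2 := by
    simp only [div3, ← Finset.sum_add_distrib]
    refine Finset.sum_congr rfl fun i _ => ?_
    simp only [Pi.smul_apply, smul_eq_mul]
    rw [← pd3_add i ((dΦ₁x).fun_mul (dvx i)) ((dΦ₂x).fun_mul (dvx i))]
    apply pd3_congr
    filter_upwards [hx] with y hy
    have h := hnovoid (q.1, y) hy
    rw [← add_mul, h, one_mul]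
  -- mass equation, spatial part expanded
  have hMdiv : div3 (fun y => (ρ₁ * Φ₁ q.1 y + ρ₂ * Φ₂ q.1 y) • v q.1 y) q.2
      = ρ₁ * div3 (fun y => Φ₁ q.1 y • v q.1 y) q.2
        + ρ₂ * div3 (fun y => Φ₂ q.1 y • v q.1 y) q.2 := by
    simp only [div3, Finset.mul_sum, ← Finset.sum_add_distrib]
    refine Finset.sum_congr rfl fun i _ => ?_
    simp only [Pi.smul_apply, smul_eq_mul]
    have e : (fun y => (ρ₁ * Φ₁ q.1 y + ρ₂ * Φ₂ q.1 y) * v q.1 y i)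
        = fun y => ρ₁ * (Φ₁ q.1 y * v q.1 y i) + ρ₂ * (Φ₂ q.1 y * v q.1 y i) := by
      funext y; ring
    rw [e, pd3_add i (((dΦ₁x).fun_mul (dvx i)).const_mul ρ₁) (((dΦ₂x).fun_mul (dvx i)).const_mul ρ₂),
      pd3_const_mul i ρ₁ ((dΦ₁x).fun_mul (dvx i)), pd3_const_mul i ρ₂ ((dΦ₂x).fun_mul (dvx i))]
  -- mass equation, time part expanded
  have hMt : deriv (fun s => ρ₁ * Φ₁ s q.2 + ρ₂ * Φ₂ s q.2) q.1
      = ρ₁ * deriv (fun s => Φ₁ s q.2) q.1 + ρ₂ * deriv (fun s => Φ₂ s q.2) q.1 := by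
    rw [deriv_fun_add (dΦ₁t.const_mul ρ₁) (dΦ₂t.const_mul ρ₂),
      deriv_const_mul ρ₁ dΦ₁t, deriv_const_mul ρ₂ dΦ₂t]
  have e1 := hvol₁ q hq
  have e2 := hvol₂ q hq
  have e5 := hmass q hq
  rw [hMdiv, hMt] at e5
  -- div of J + div of Jt = 0
  have hJsum : div3 (fun y => J q.1 y + Jt q.1 y) q.2
      = div3 (J q.1) q.2 + div3 (Jt q.1) q.2 := by
    simp only [div3, ← Finset.sum_add_distrib]
    refine Finset.sum_congr rfl fun i _ => ?_
    simp only [Pi.add_apply]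
    exact pd3_add i (dJx i) (dJtx i)
  have e1' : ρ₁ * (deriv (fun s => Φ₁ s q.2) q.1
      + div3 (fun y => Φ₁ q.1 y • v q.1 y) q.2) = -div3 (J q.1) q.2 := by
    rw [e1]; field_simp
  have e2' : ρ₂ * (deriv (fun s => Φ₂ s q.2) q.1
      + div3 (fun y => Φ₂ q.1 y • v q.1 y) q.2) = -div3 (Jt q.1) q.2 := by
    rw [e2]; field_simp
  have hE : div3 (J q.1) q.2 + div3 (Jt q.1) q.2 = 0 := by
    linear_combination e1' + e2' - e5
  refine ⟨by rw [hJsum, hE], ?_⟩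
  have hE2 : div3 (Jt q.1) q.2 = -div3 (J q.1) q.2 := by linarith
  have hB : div3 (v q.1) q.2
      = (-(1 / ρ₁) * div3 (J q.1) q.2 - deriv (fun s => Φ₁ s q.2) q.1)
        + (-(1 / ρ₂) * div3 (Jt q.1) q.2 - deriv (fun s => Φ₂ s q.2) q.1) := by
    linarith
  rw [hB, hE2]
  have hA : deriv (fun s => Φ₂ s q.2) q.1 = -deriv (fun s => Φ₁ s q.2) q.1 := by linarith
  rw [hA]
  field_simp
  ring
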